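/- arXiv:math/0503204 — 2 statements merged into one kernel-verified Lean document; each statement's English description precedes it below -/
import Mathlib

section
/- Every abelian subgroup of the symmetric group Sym(n) has order at most 3^(n/3) (in particular, at most 2^n for n ≥ 1). -/
open MulAction

lemma cube_le_three_pow (m : ℕ) : m ^ 3 ≤ 3 ^ m := by
  induction m with
  | zero => norm_num
  | succ k ih =>
    rcases Nat.lt_or_ge k 3 with h | h
    · interval_cases k <;> norm_num
    · have h1 : 3 * (k * k) ≤ k * k * k := by
        calc 3 * (k * k) ≤ k * (k * k) := Nat.mul_le_mul_right _ h
          _ = k * k * k := by ring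
      have h2 : 3 * k ≤ k * k := Nat.mul_le_mul_right _ h
      calc (k + 1) ^ 3 ≤ 3 * k ^ 3 := by nlinarith [h, h1, h2]
        _ ≤ 3 * 3 ^ k := Nat.mul_le_mul_left 3 ih
        _ = 3 ^ (k + 1) := by ring

lemma nat_le_rpow_third (m : ℕ) : (m : ℝ) ≤ (3 : ℝ) ^ ((m : ℝ) / 3) := by
  have h3 : (0 : ℝ) < 3 := by norm_num
  have hb : (0 : ℝ) ≤ (3 : ℝ) ^ ((m : ℝ) / 3) := (Real.rpow_pos_of_pos h3 _).le
  have key : ((m : ℝ)) ^ (3 : ℕ) ≤ ((3 : ℝ) ^ ((m : ℝ) / 3)) ^ (3 : ℕ) := by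
    have h1 : ((3 : ℝ) ^ ((m : ℝ) / 3)) ^ (3 : ℕ) = (3 : ℝ) ^ (m : ℝ) := by
      rw [← Real.rpow_natCast ((3 : ℝ) ^ ((m : ℝ) / 3)) 3, ← Real.rpow_mul h3.le]
      norm_num
    rw [h1, Real.rpow_natCast]
    exact_mod_cast cube_le_three_pow m
  exact le_of_pow_le_pow_left₀ (by norm_num) hb key

/-- Every abelian subgroup of `Sym(n)` has order at most `3^(n/3)`;
in particular, at most `2^n` for `n ≥ 1`. -/
theorem abelian_subgroup_symmetric_card_le (n : ℕ)
    (H : Subgroup (Equiv.Perm (Fin n)))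
    (hH : ∀ a b : Equiv.Perm (Fin n), a ∈ H → b ∈ H → a * b = b * a) :
    (Nat.card H : ℝ) ≤ (3 : ℝ) ^ ((n : ℝ) / 3) ∧
      (1 ≤ n → Nat.card H ≤ 2 ^ n) := by
  classical
  set Ω := orbitRel.Quotient H (Fin n) with hΩdef
  letI : Fintype Ω := Fintype.ofFinite _
  letI : ∀ ω : Ω, Fintype ω.orbit := fun ω => Fintype.ofFinite _
  -- the key injection
  have hinj : Function.Injective
      (fun (h : H) => fun (ω : Ω) =>
        (⟨h • ω.out, by
          rw [orbitRel.Quotient.orbit_eq_orbit_out ω Quotient.out_eq']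
          exact mem_orbit _ h⟩ : ω.orbit)) := by
    intro a b hab
    have hab' : ∀ ω : Ω, a • ω.out = b • ω.out := by
      intro ω
      have := congrFun hab ω
      exact Subtype.ext_iff.mp this
    ext x
    have hx : x ∈ orbit H ((Quotient.mk'' x : Ω).out) := by
      rw [← orbitRel.Quotient.orbit_eq_orbit_out _ Quotient.out_eq',
        orbitRel.Quotient.mem_orbit]
    obtain ⟨g, hg⟩ := hx
    set y := (Quotient.mk'' x : Ω).out
    have hcomm : ∀ c : H, c * g = g * c := fun c =>
      Subtype.ext (hH c g c.2 g.2)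
    have ha : (a : Equiv.Perm (Fin n)) x = a • x := rfl
    have hbx : (b : Equiv.Perm (Fin n)) x = b • x := rfl
    rw [ha, hbx, ← hg, smul_smul, smul_smul, hcomm a, hcomm b,
      ← smul_smul, ← smul_smul, hab' _]
  have hcard : Nat.card H ≤ Nat.card (∀ ω : Ω, ω.orbit) :=
    Nat.card_le_card_of_injective _ hinj
  have hprod : Nat.card (∀ ω : Ω, ω.orbit) = ∏ ω : Ω, Nat.card ω.orbit := by
    simp [Nat.card_pi]
  have hsum : n = ∑ ω : Ω, Nat.card ω.orbit := by
    have h1 := Nat.card_congr (selfEquivSigmaOrbits' H (Fin n))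
    simpa [Nat.card_eq_fintype_card, Fintype.card_sigma] using h1
  rw [hprod] at hcard
  have hsumR : (n : ℝ) = ∑ ω : Ω, (Nat.card ω.orbit : ℝ) := by
    exact_mod_cast hsum
  constructor
  · calc (Nat.card H : ℝ) ≤ (∏ ω : Ω, Nat.card ω.orbit : ℕ) := by exact_mod_cast hcard
      _ = ∏ ω : Ω, ((Nat.card ω.orbit : ℝ)) := by push_cast; ring
      _ ≤ ∏ ω : Ω, (3 : ℝ) ^ ((Nat.card ω.orbit : ℝ) / 3) := by
          apply Finset.prod_le_prod
          · intro i _; positivity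
          · intro i _; exact nat_le_rpow_third _
      _ = (3 : ℝ) ^ (∑ ω : Ω, ((Nat.card ω.orbit : ℝ) / 3)) := by
          rw [Real.rpow_sum_of_pos (by norm_num)]
      _ = (3 : ℝ) ^ ((n : ℝ) / 3) := by
          congr 1
          rw [← Finset.sum_div, ← hsumR]
  · intro _
    calc Nat.card H ≤ ∏ ω : Ω, Nat.card ω.orbit := hcard
      _ ≤ ∏ ω : Ω, 2 ^ Nat.card ω.orbit := by
          apply Finset.prod_le_prod'
          intro i _
          exact Nat.lt_two_pow_self.le
      _ = 2 ^ (∑ ω : Ω, Nat.card ω.orbit) := by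
          rw [← Finset.prod_pow_eq_pow_sum]
      _ = 2 ^ n := by rw [← hsum]
end

section
/- Let G be a finite group generated by a finite set S, and suppose the Kazhdan constant K(G;S) ≥ ε > 0, meaning: for every unitary representation ρ of G on a finite-dimensional complex inner product space with no nonzero G-invariant vector, and every unit vector v, there exists s ∈ S with ‖ρ(s)v − v‖ > ε. Then the Cayley graph of G with respect to S is an (ε²/4)-expander: every subset A with |A| ≤ |G|/2 satisfies |∂A| ≥ (ε²/4)|A|, where ∂A is the set of vertices outside A adjacent to A. -/
open scoped Pointwise

namespace ExpKaz

variable (G : Type*) [Group G] [Fintype G] [DecidableEq G]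

noncomputable def sumL : EuclideanSpace ℂ G →ₗ[ℂ] ℂ where
  toFun f := ∑ x, f x
  map_add' f g := by simp [Finset.sum_add_distrib]
  map_smul' c f := by simp [Finset.mul_sum]

noncomputable def W : Submodule ℂ (EuclideanSpace ℂ G) := LinearMap.ker (sumL G)

variable {G}

lemma mem_W_iff (f : EuclideanSpace ℂ G) : f ∈ W G ↔ ∑ x, f x = 0 := Iff.rfl

noncomputable def Rfull (g : G) : EuclideanSpace ℂ G ≃ₗᵢ[ℂ] EuclideanSpace ℂ G :=
  LinearIsometryEquiv.piLpCongrLeft 2 ℂ ℂ (Equiv.mulRight g).symm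

lemma Rfull_apply (g : G) (f : EuclideanSpace ℂ G) (x : G) : Rfull g f x = f (x * g) := rfl

lemma shift_mem_W (g : G) (f : EuclideanSpace ℂ G) (hf : f ∈ W G) :
    Rfull g f ∈ W G := by
  rw [mem_W_iff] at hf ⊢
  have : ∀ x : G, Rfull g f x = f (x * g) := fun x => Rfull_apply g f x
  calc ∑ x, Rfull g f x = ∑ x, f (x * g) := Finset.sum_congr rfl (fun x _ => this x)
    _ = ∑ x, f x := Fintype.sum_equiv (Equiv.mulRight g) _ f (fun x => rfl)
    _ = 0 := hf

noncomputable def rT (g : G) : W G ≃ₗᵢ[ℂ] W G where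
  toLinearEquiv :=
  { toFun := fun f => ⟨Rfull g f.1, shift_mem_W g f.1 f.2⟩
    map_add' := fun f h => Subtype.ext (map_add (Rfull g) f.1 h.1)
    map_smul' := fun c f => Subtype.ext (map_smul (Rfull g) c f.1)
    invFun := fun f => ⟨Rfull g⁻¹ f.1, shift_mem_W g⁻¹ f.1 f.2⟩
    left_inv := fun f => by
      ext x
      show Rfull g⁻¹ (Rfull g f.1) x = f.1 x
      rw [Rfull_apply, Rfull_apply, inv_mul_cancel_right]
    right_inv := fun f => by
      ext x
      show Rfull g (Rfull g⁻¹ f.1) x = f.1 x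
      rw [Rfull_apply, Rfull_apply, mul_inv_cancel_right] }
  norm_map' := fun f => (Rfull g).norm_map f.1

lemma rT_apply (g : G) (f : W G) (x : G) :
    ((rT g f : W G) : EuclideanSpace ℂ G) x = (f : EuclideanSpace ℂ G) (x * g) := rfl

noncomputable def rep : G →*
    (EuclideanSpace ℂ (Fin (Module.finrank ℂ (W G))) ≃ₗᵢ[ℂ]
      EuclideanSpace ℂ (Fin (Module.finrank ℂ (W G)))) where
  toFun g := ((stdOrthonormalBasis ℂ (W G)).repr.symm.trans (rT g)).trans
      (stdOrthonormalBasis ℂ (W G)).repr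
  map_one' := by
    refine LinearIsometryEquiv.ext fun v => ?_
    simp only [LinearIsometryEquiv.trans_apply]
    have : rT (1 : G) ((stdOrthonormalBasis ℂ (W G)).repr.symm v)
        = (stdOrthonormalBasis ℂ (W G)).repr.symm v := by
      ext x; rw [rT_apply, mul_one]
    rw [this]; simp
  map_mul' := fun g h => by
    refine LinearIsometryEquiv.ext fun v => ?_
    simp only [LinearIsometryEquiv.trans_apply, LinearIsometryEquiv.coe_mul, Function.comp_apply,
      LinearIsometryEquiv.symm_apply_apply]
    congr 1
    ext x
    rw [rT_apply, rT_apply, rT_apply, mul_assoc]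

lemma rep_no_invariant :
    ¬ ∃ w : EuclideanSpace ℂ (Fin (Module.finrank ℂ (W G))), w ≠ 0 ∧
      ∀ g : G, rep g w = w := by
  rintro ⟨w, hw0, hw⟩
  set e := (stdOrthonormalBasis ℂ (W G)).repr with he
  set f : W G := e.symm w with hf
  have hinv : ∀ g : G, rT g f = f := by
    intro g
    have h1 := hw g
    simp only [rep, MonoidHom.coe_mk, OneHom.coe_mk, LinearIsometryEquiv.trans_apply] at h1
    have h2 := congrArg e.symm h1
    simpa [he] using h2
  have hconst : ∀ g : G, (f : EuclideanSpace ℂ G) g = (f : EuclideanSpace ℂ G) 1 := by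
    intro g
    have h2 : ((rT g f : W G) : EuclideanSpace ℂ G) 1 = (f : EuclideanSpace ℂ G) 1 :=
      congrArg (fun u : W G => (u : EuclideanSpace ℂ G) 1) (hinv g)
    rw [rT_apply, one_mul] at h2
    exact h2
  have hsum : ∑ x : G, (f : EuclideanSpace ℂ G) x = 0 := f.2
  have hmul : (Fintype.card G : ℂ) * (f : EuclideanSpace ℂ G) 1 = 0 := by
    rw [← hsum, Finset.sum_congr rfl (fun x _ => hconst x)]
    simp [Finset.card_univ, mul_comm]
  have hcard : (Fintype.card G : ℂ) ≠ 0 := by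
    exact_mod_cast Nat.cast_ne_zero.mpr Fintype.card_ne_zero
  have h1 : (f : EuclideanSpace ℂ G) 1 = 0 := (mul_eq_zero.mp hmul).resolve_left hcard
  have hfz : f = 0 := by
    ext x
    simpa [hconst x] using h1
  apply hw0
  have := congrArg e hfz
  simpa [he, hf] using this

end ExpKaz

open ExpKaz in
set_option maxHeartbeats 1000000 in
/-- If the Kazhdan constant of a finite group `G` with respect to a generating
set `S` is at least `ε`, then the Cayley graph `C(G,S)` is an `ε²/4`-expander. -/
theorem expander_of_kazhdan {G : Type*} [Group G] [Fintype G] [DecidableEq G]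
    (S : Finset G) (hgen : Subgroup.closure (S : Set G) = ⊤)
    (ε : ℝ) (hε : 0 < ε)
    (hkaz : ∀ (d : ℕ)
      (ρ : G →* (EuclideanSpace ℂ (Fin d) ≃ₗᵢ[ℂ] EuclideanSpace ℂ (Fin d))),
      (¬ ∃ w : EuclideanSpace ℂ (Fin d), w ≠ 0 ∧ ∀ g : G, ρ g w = w) →
      ∀ v : EuclideanSpace ℂ (Fin d), ‖v‖ = 1 → ∃ s ∈ S, ε < ‖ρ s v - v‖) :
    ∀ A : Finset G, (A.card : ℝ) ≤ (Fintype.card G : ℝ) / 2 →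
      ε ^ 2 / 4 * A.card ≤
        ((Finset.univ.filter (fun g : G =>
          g ∉ A ∧ ∃ s ∈ S, g * s ∈ A ∨ g * s⁻¹ ∈ A)).card : ℝ) := by
  intro A hA
  classical
  rcases A.eq_empty_or_nonempty with rfl | hAne
  · simp
  have hn0 : 0 < Fintype.card G := Fintype.card_pos
  have hnR : (0:ℝ) < (Fintype.card G : ℝ) := by exact_mod_cast hn0
  set n : ℝ := (Fintype.card G : ℝ) with hn
  set α : ℝ := (A.card : ℝ) / n with hα
  have hA1 : (1:ℝ) ≤ A.card := by exact_mod_cast Finset.card_pos.mpr hAne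
  have hα2 : α ≤ 1/2 := by
    rw [hα, div_le_iff₀ hnR]; linarith
  have hα0 : 0 ≤ α := by positivity
  set fA : EuclideanSpace ℂ G :=
    WithLp.toLp 2 (fun x => (if x ∈ A then (1:ℂ) else 0) - (α : ℂ)) with hfA
  have hfAx : ∀ x : G, fA x = (if x ∈ A then (1:ℂ) else 0) - (α : ℂ) := fun x => by
    rw [hfA]
  have hαn : α * n = A.card := by
    rw [hα]; field_simp
  have hmem : fA ∈ W G := by
    rw [mem_W_iff]
    have : ∑ x : G, fA x = ∑ x : G, ((if x ∈ A then (1:ℂ) else 0) - (α : ℂ)) :=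
      Finset.sum_congr rfl (fun x _ => hfAx x)
    rw [this, Finset.sum_sub_distrib, Finset.sum_boole, Finset.sum_const,
      Finset.card_univ]
    have : ((Finset.univ.filter (fun x : G => x ∈ A)).card : ℂ) = (A.card : ℂ) := by
      norm_cast
      congr 1
      simp [Finset.filter_univ_mem]
    rw [this, nsmul_eq_mul]
    rw [show ((Fintype.card G : ℂ)) * ((α:ℝ):ℂ) = ((n * α :ℝ):ℂ) by push_cast [hn]; ring]
    rw [show n * α = (A.card:ℝ) by rw [mul_comm]; exact hαn]
    simp
  -- norm of fA squared
  have hsq : ∀ x : G, ‖fA x‖ ^ 2 = if x ∈ A then (1 - α)^2 else α^2 := by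
    intro x
    rw [hfAx x]
    by_cases hx : x ∈ A
    · simp only [hx, if_true]
      have : (1:ℂ) - (α:ℂ) = ((1 - α : ℝ) : ℂ) := by push_cast; ring
      rw [this, Complex.norm_real, Real.norm_eq_abs, sq_abs]
    · simp only [hx, if_false]
      have : (0:ℂ) - (α:ℂ) = ((-α : ℝ) : ℂ) := by push_cast; ring
      rw [this, Complex.norm_real, Real.norm_eq_abs, sq_abs]
      ring
  have hnormsq : ‖fA‖ ^ 2 = A.card * (1 - α) := by
    rw [EuclideanSpace.norm_eq, Real.sq_sqrt (by positivity)]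
    rw [Finset.sum_congr rfl (fun x _ => hsq x)]
    rw [Finset.sum_ite, Finset.sum_const, Finset.sum_const]
    simp only [Finset.filter_univ_mem, nsmul_eq_mul]
    rw [Finset.filter_not, Finset.filter_univ_mem, Finset.card_sdiff_of_subset (Finset.subset_univ A),
      Finset.card_univ]
    have hcle : A.card ≤ Fintype.card G := Finset.card_le_univ A
    have : ((Fintype.card G - A.card : ℕ) : ℝ) = n - A.card := by
      rw [Nat.cast_sub hcle, hn]
    rw [this]
    nlinarith [hαn]
  have hfpos : 0 < ‖fA‖ := by
    have h2 : 0 < ‖fA‖ ^ 2 := by rw [hnormsq]; nlinarith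
    refine (norm_nonneg fA).lt_of_ne (fun h => ?_)
    rw [← h] at h2
    simp at h2
  -- the unit vector
  set e := (stdOrthonormalBasis ℂ (W G)).repr with he
  set fv : W G := ⟨fA, hmem⟩ with hfv
  have hnfv : ‖fv‖ = ‖fA‖ := by rw [Submodule.coe_norm]
  set v : EuclideanSpace ℂ (Fin (Module.finrank ℂ (W G))) :=
    ((‖fA‖⁻¹ : ℝ) : ℂ) • e fv with hv
  have hvnorm : ‖v‖ = 1 := by
    rw [hv, norm_smul, e.norm_map, hnfv]
    simp [Complex.norm_real, abs_of_nonneg (le_of_lt (inv_pos.mpr hfpos)),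
      inv_mul_cancel₀ (ne_of_gt hfpos)]
  obtain ⟨s, hsS, hlt⟩ := hkaz _ rep rep_no_invariant v hvnorm
  -- compute the norm of rep s v - v
  have hrep : rep s (e fv) = e (rT s fv) := by
    simp only [rep, MonoidHom.coe_mk, OneHom.coe_mk, LinearIsometryEquiv.trans_apply,
      he, LinearIsometryEquiv.symm_apply_apply]
  have hdiff : rep s v - v = ((‖fA‖⁻¹ : ℝ) : ℂ) • (e (rT s fv - fv)) := by
    rw [hv, map_smul, hrep, ← smul_sub, map_sub]
  set gd : EuclideanSpace ℂ G := Rfull s fA - fA with hgd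
  have hgdW : ((rT s fv - fv : W G) : EuclideanSpace ℂ G) = gd := rfl
  have hnd : ‖rep s v - v‖ = ‖fA‖⁻¹ * ‖gd‖ := by
    rw [hdiff, norm_smul, e.norm_map]
    have h1 : ‖((‖fA‖⁻¹ : ℝ) : ℂ)‖ = ‖fA‖⁻¹ := by
      simp [abs_of_nonneg (le_of_lt (inv_pos.mpr hfpos))]
    have h2 : ‖(rT s fv - fv : W G)‖ = ‖gd‖ := by rw [Submodule.coe_norm, hgdW]
    rw [h1, h2]
  have hgdlt : ε * ‖fA‖ < ‖gd‖ := by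
    rw [hnd] at hlt
    calc ε * ‖fA‖ < (‖fA‖⁻¹ * ‖gd‖) * ‖fA‖ := by
          apply mul_lt_mul_of_pos_right hlt hfpos
      _ = ‖gd‖ := by field_simp
  -- compute ‖gd‖² as a count
  have hgdx : ∀ x : G, gd x = (if x * s ∈ A then (1:ℂ) else 0) - (if x ∈ A then (1:ℂ) else 0) := by
    intro x
    rw [hgd]
    have h1 : (Rfull s fA - fA) x = Rfull s fA x - fA x := rfl
    rw [h1, Rfull_apply, hfAx, hfAx]
    ring
  have hgdsq : ∀ x : G, ‖gd x‖ ^ 2 =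
      if ((x * s ∈ A) ↔ (x ∈ A)) then 0 else 1 := by
    intro x
    rw [hgdx x]
    by_cases h1 : x * s ∈ A <;> by_cases h2 : x ∈ A <;>
      simp [h1, h2]
  set D : Finset G := Finset.univ.filter (fun x => ¬((x * s ∈ A) ↔ (x ∈ A))) with hD
  have hgdnorm : ‖gd‖ ^ 2 = D.card := by
    rw [EuclideanSpace.norm_eq, Real.sq_sqrt (by positivity)]
    rw [Finset.sum_congr rfl (fun x _ => hgdsq x)]
    rw [Finset.sum_ite, Finset.sum_const, Finset.sum_const]
    simp [hD, Finset.filter_not]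
  -- the boundary
  set B : Finset G := Finset.univ.filter (fun g : G =>
      g ∉ A ∧ ∃ s ∈ S, g * s ∈ A ∨ g * s⁻¹ ∈ A) with hB
  set D1 : Finset G := Finset.univ.filter (fun x => x ∉ A ∧ x * s ∈ A) with hD1
  set D2 : Finset G := Finset.univ.filter (fun x => x ∈ A ∧ x * s ∉ A) with hD2
  set D2' : Finset G := Finset.univ.filter (fun y => y ∉ A ∧ y * s⁻¹ ∈ A) with hD2'
  have hDsplit : D = D1 ∪ D2 := by
    ext x
    simp only [hD, hD1, hD2, Finset.mem_filter, Finset.mem_union, Finset.mem_univ, true_and]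
    tauto
  have hDdisj : Disjoint D1 D2 := by
    rw [Finset.disjoint_left]
    intro x hx1 hx2
    simp only [hD1, hD2, Finset.mem_filter, Finset.mem_univ, true_and] at hx1 hx2
    tauto
  have hDcard : D.card = D1.card + D2.card := by
    rw [hDsplit, Finset.card_union_of_disjoint hDdisj]
  have hD2card : D2.card = D2'.card := by
    apply Finset.card_bij (fun x _ => x * s)
    · intro x hx
      simp only [hD2, Finset.mem_filter, Finset.mem_univ, true_and] at hx
      simp only [hD2', Finset.mem_filter, Finset.mem_univ, true_and,
        mul_inv_cancel_right]
      exact ⟨hx.2, hx.1⟩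
    · intro x hx y hy hxy
      exact mul_right_cancel hxy
    · intro y hy
      simp only [hD2', Finset.mem_filter, Finset.mem_univ, true_and] at hy
      refine ⟨y * s⁻¹, ?_, by rw [inv_mul_cancel_right]⟩
      simp only [hD2, Finset.mem_filter, Finset.mem_univ, true_and,
        inv_mul_cancel_right]
      exact ⟨hy.2, hy.1⟩
  have hD1B : D1 ⊆ B := by
    intro x hx
    simp only [hD1, Finset.mem_filter, Finset.mem_univ, true_and] at hx
    simp only [hB, Finset.mem_filter, Finset.mem_univ, true_and]
    exact ⟨hx.1, s, hsS, Or.inl hx.2⟩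
  have hD2B : D2' ⊆ B := by
    intro y hy
    simp only [hD2', Finset.mem_filter, Finset.mem_univ, true_and] at hy
    simp only [hB, Finset.mem_filter, Finset.mem_univ, true_and]
    exact ⟨hy.1, s, hsS, Or.inr hy.2⟩
  have hDB : (D.card : ℝ) ≤ 2 * B.card := by
    rw [hDcard, hD2card]
    have h1 : D1.card ≤ B.card := Finset.card_le_card hD1B
    have h2 : D2'.card ≤ B.card := Finset.card_le_card hD2B
    push_cast
    have h1' : (D1.card : ℝ) ≤ B.card := by exact_mod_cast h1
    have h2' : (D2'.card : ℝ) ≤ B.card := by exact_mod_cast h2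
    linarith
  -- final arithmetic
  have hkey : ε ^ 2 * (A.card * (1 - α)) < (D.card : ℝ) := by
    have h0 : 0 ≤ ε * ‖fA‖ := by positivity
    have := mul_self_lt_mul_self h0 hgdlt
    calc ε ^ 2 * (A.card * (1 - α)) = (ε * ‖fA‖) * (ε * ‖fA‖) := by
          rw [← hnormsq]; ring
      _ < ‖gd‖ * ‖gd‖ := this
      _ = ‖gd‖ ^ 2 := by ring
      _ = D.card := hgdnorm
  nlinarith [sq_nonneg ε, hA1, hα2, hDB, hkey, mul_pos (mul_pos hε hε) (lt_of_lt_of_le zero_lt_one hA1)]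
end
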